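/- Let A be a k-algebra with an arbitrary bilinear product, and let α, β : ℤ → A be coefficient families of formal series that are local of order N ∈ ℕ. Then for every n ≥ N the product α(n)β is identically zero, i.e., (α(n)β)(m) = 0 for all m ∈ ℤ. -/
import Mathlib


open Finset

/-- If two coefficient families `α, β : ℤ → A` (with values in a `k`-algebra
`A` with an arbitrary bilinear product `mul`) are local of order `N`, then for every `n ≥ N`
the `n`-th product `α(n)β` vanishes identically. -/
theorem nprod_eq_zero_of_local
    {k A : Type} [Field k] [CharZero k] [AddCommGroup A] [Module k A]
    (mul : A →ₗ[k] A →ₗ[k] A) (α β : ℤ → A) (N : ℕ)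
    (hloc : ∀ m n : ℤ, ∑ s ∈ Finset.range (N + 1),
      ((-1 : ℤ) ^ s * (N.choose s : ℤ)) • mul (α (n - s)) (β (m + s)) = 0)
    (n : ℕ) (hn : N ≤ n) (m : ℤ) :
    ∑ s ∈ Finset.range (n + 1),
      ((-1 : ℤ) ^ s * (n.choose s : ℤ)) • mul (α ((n : ℤ) - s)) (β (m + s)) = 0 := by
  suffices h : ∀ m' n' : ℤ, ∑ s ∈ Finset.range (n + 1),
      ((-1 : ℤ) ^ s * (n.choose s : ℤ)) • mul (α (n' - s)) (β (m' + s)) = 0 from h m n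
  induction n, hn using Nat.le_induction with
  | base => exact hloc
  | succ n hn ih =>
    intro m' n'
    have h1 := ih m' n'
    have h2 := ih (m' + 1) (n' - 1)
    rw [Finset.sum_range_succ'] at h1 ⊢
    simp only [Nat.choose_succ_succ', Nat.cast_add, mul_add, add_smul,
      Finset.sum_add_distrib] at h1 ⊢
    push_cast at h1 ⊢
    have hS1 : (∑ s ∈ Finset.range (n + 1),
        ((-1 : ℤ) ^ (s + 1) * (n.choose s : ℤ)) • mul (α (n' - (↑s + 1))) (β (m' + (↑s + 1))))
        = 0 := by
      have : ∀ s ∈ Finset.range (n + 1),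
          ((-1 : ℤ) ^ (s + 1) * (n.choose s : ℤ)) • mul (α (n' - (↑s + 1))) (β (m' + (↑s + 1)))
          = (-1 : ℤ) • (((-1 : ℤ) ^ s * (n.choose s : ℤ)) •
              mul (α (n' - 1 - s)) (β (m' + 1 + s))) := by
        intro s _
        have e1 : n' - ((s : ℤ) + 1) = n' - 1 - s := by ring
        have e2 : m' + ((s : ℤ) + 1) = m' + 1 + s := by ring
        rw [e1, e2, smul_smul]
        congr 1
        ring
      rw [Finset.sum_congr rfl this, ← Finset.smul_sum, h2, smul_zero]
    rw [hS1]
    rw [Finset.sum_range_succ]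
    simp only [Nat.choose_succ_self, Nat.cast_zero, mul_zero, zero_smul, add_zero]
    simpa using h1
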